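/- Let U be a unitary 2n×2n complex matrix, h₁, …, h₂ₙ positive real numbers, D the diagonal matrix with D_jj = 1 + i/h_j, D̄ its entrywise conjugate, and F = D̄ − U D the boundary matrix. Set U₀ = U D D̄⁻¹ (a unitary matrix) and suppose 1 is not an eigenvalue of U₀. Then F is invertible and, with ‖·‖ the operator (spectral) norm, ‖F‖ ≤ 2‖D‖ and ‖F⁻¹‖ ≤ ‖D⁻¹‖ / min{ |1 − λ| : λ an eigenvalue of U₀ }; consequently the condition number satisfies κ(F) = ‖F‖·‖F⁻¹‖ ≤ 2 ‖D‖ ‖D⁻¹‖ / min{ |1 − λ| : λ an eigenvalue of U₀ }. -/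

import Mathlib

/-- The operator (spectral) norm of a complex matrix, i.e. the norm of the induced
continuous linear endomorphism of Euclidean space. -/
noncomputable def opNorm {m : ℕ} (A : Matrix (Fin m) (Fin m) ℂ) : ℝ :=
  ‖Matrix.toEuclideanCLM (𝕜 := ℂ) (n := Fin m) A‖

open scoped Matrix.Norms.L2Operator Pointwise in
set_option maxHeartbeats 1000000 in
set_option synthInstance.maxHeartbeats 400000 in
/-- Conditioning of the boundary matrix `F = D̄ - U D`: if `1` is not an eigenvalue of the
unitary matrix `U₀ = U D D̄⁻¹`, then `F` is invertible, `‖F‖ ≤ 2‖D‖`,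
`‖F⁻¹‖ ≤ ‖D⁻¹‖ / min{|1-λ| : λ ∈ spec U₀}`, and hence
`κ(F) = ‖F‖‖F⁻¹‖ ≤ 2‖D‖‖D⁻¹‖ / min{|1-λ| : λ ∈ spec U₀}`. -/
theorem stmt_12 (n : ℕ) (hn : 0 < n) (U : Matrix (Fin (2 * n)) (Fin (2 * n)) ℂ)
    (hU : U ∈ Matrix.unitaryGroup (Fin (2 * n)) ℂ)
    (h : Fin (2 * n) → ℝ) (hpos : ∀ j, 0 < h j) :
    let D : Matrix (Fin (2 * n)) (Fin (2 * n)) ℂ :=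
      Matrix.diagonal fun j => 1 + Complex.I / (h j : ℂ)
    let Dbar := D.map (starRingEnd ℂ)
    let F := Dbar - U * D
    let U₀ := U * D * Dbar⁻¹
    let μ := sInf {r : ℝ | ∃ z ∈ spectrum ℂ U₀, r = ‖1 - z‖}
    (∀ x : Fin (2 * n) → ℂ, U₀.mulVec x = x → x = 0) →
      IsUnit F ∧ opNorm F ≤ 2 * opNorm D ∧ opNorm F⁻¹ ≤ opNorm D⁻¹ / μ ∧
        opNorm F * opNorm F⁻¹ ≤ 2 * opNorm D * opNorm D⁻¹ / μ := by
  intro D Dbar F U₀ μ hker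
  haveI : Nonempty (Fin (2 * n)) := ⟨⟨0, by omega⟩⟩
  haveI hNSG : NormedStarGroup (Matrix (Fin (2 * n)) (Fin (2 * n)) ℂ) :=
    CStarRing.to_normedStarGroup
  letI : CStarAlgebra (Matrix (Fin (2 * n)) (Fin (2 * n)) ℂ) := {}
  set d : Fin (2 * n) → ℂ := fun j => 1 + Complex.I / (h j : ℂ) with hd
  -- basic facts about the diagonal entries
  have hd0 : ∀ j, d j ≠ 0 := by
    intro j h0
    have : (d j).re = 1 := by
      simp [hd, Complex.add_re, Complex.div_re, Complex.normSq]
    rw [h0] at this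
    simp at this
  have hdc0 : ∀ j, (starRingEnd ℂ) (d j) ≠ 0 := fun j => by
    simpa using hd0 j
  -- D and Dbar as diagonal matrices
  have hD : D = Matrix.diagonal d := rfl
  have hDbar : Dbar = Matrix.diagonal fun j => (starRingEnd ℂ) (d j) := by
    show (Matrix.diagonal d).map (starRingEnd ℂ) = _
    rw [Matrix.diagonal_map (map_zero _)]
  have hDbar_star : Dbar = star D := by
    rw [hDbar, hD, Matrix.star_eq_conjTranspose, Matrix.diagonal_conjTranspose]
    rfl
  -- explicit inverses
  have hDinv : D⁻¹ = Matrix.diagonal fun j => (d j)⁻¹ := by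
    apply Matrix.inv_eq_right_inv
    rw [hD, Matrix.diagonal_mul_diagonal]
    convert Matrix.diagonal_one using 2
    exact funext fun j => mul_inv_cancel₀ (hd0 j)
  have hDbarinv : Dbar⁻¹ = Matrix.diagonal fun j => ((starRingEnd ℂ) (d j))⁻¹ := by
    apply Matrix.inv_eq_right_inv
    rw [hDbar, Matrix.diagonal_mul_diagonal]
    convert Matrix.diagonal_one using 2
    exact funext fun j => mul_inv_cancel₀ (hdc0 j)
  have hDbarinv_star : Dbar⁻¹ = star D⁻¹ := by
    have e : (star fun j : Fin (2 * n) => (d j)⁻¹) = fun j => ((starRingEnd ℂ) (d j))⁻¹ :=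
      funext fun j => by simp only [Pi.star_apply, star_inv₀]; rfl
    rw [hDbarinv, hDinv, Matrix.star_eq_conjTranspose, Matrix.diagonal_conjTranspose, e]
  have hDbarinvDbar : Dbar⁻¹ * Dbar = 1 := by
    rw [hDbarinv, hDbar, Matrix.diagonal_mul_diagonal]
    convert Matrix.diagonal_one using 2
    exact funext fun j => inv_mul_cancel₀ (hdc0 j)
  -- U₀ is unitary
  have hU₀mem : U₀ ∈ Matrix.unitaryGroup (Fin (2 * n)) ℂ := by
    have hE : (D * Dbar⁻¹) ∈ Matrix.unitaryGroup (Fin (2 * n)) ℂ := by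
      rw [Matrix.mem_unitaryGroup_iff, hD, hDbarinv, Matrix.diagonal_mul_diagonal,
        Matrix.star_eq_conjTranspose, Matrix.diagonal_conjTranspose, Matrix.diagonal_mul_diagonal]
      convert Matrix.diagonal_one using 2
      funext j
      have h1 := hd0 j
      have h2 := hdc0 j
      simp only [Pi.star_apply, star_mul', star_inv₀]
      have e1 : star ((starRingEnd ℂ) (d j)) = d j := Complex.conj_conj _
      have e2 : star (d j) = (starRingEnd ℂ) (d j) := rfl
      rw [e1, e2]
      field_simp
    have h₀ : U₀ = U * (D * Dbar⁻¹) := mul_assoc U D Dbar⁻¹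
    rw [h₀]
    exact mul_mem hU hE
  -- invertibility of 1 - U₀
  have hb_unit : IsUnit (1 - U₀) := by
    rw [Matrix.isUnit_iff_isUnit_det, isUnit_iff_ne_zero]
    intro hdet
    obtain ⟨v, hv0, hv⟩ := (Matrix.exists_mulVec_eq_zero_iff).2 hdet
    apply hv0
    apply hker
    rwa [Matrix.sub_mulVec, Matrix.one_mulVec, sub_eq_zero, eq_comm] at hv
  set G := (1 - U₀)⁻¹ with hGdef
  have hdet_unit : IsUnit (1 - U₀).det := (Matrix.isUnit_iff_isUnit_det _).1 hb_unit
  have hG1 : (1 - U₀) * G = 1 := Matrix.mul_nonsing_inv _ hdet_unit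
  have hG2 : G * (1 - U₀) = 1 := Matrix.nonsing_inv_mul _ hdet_unit
  -- factorization F = (1 - U₀) * Dbar
  have hF_fact : F = (1 - U₀) * Dbar := by
    show Dbar - U * D = _
    rw [sub_mul, one_mul, mul_assoc, hDbarinvDbar, mul_one]
  have hF_unit : IsUnit F := by
    rw [hF_fact]
    exact hb_unit.mul (by
      rw [Matrix.isUnit_iff_isUnit_det, hDbar, Matrix.det_diagonal, isUnit_iff_ne_zero]
      exact Finset.prod_ne_zero_iff.2 fun j _ => hdc0 j)
  have hFinv : F⁻¹ = Dbar⁻¹ * G := by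
    apply Matrix.inv_eq_left_inv
    rw [hF_fact, mul_assoc, ← mul_assoc G, hG2, one_mul, hDbarinvDbar]
  -- norm bound for F
  have hF_norm : ‖F‖ ≤ 2 * ‖D‖ := by
    calc ‖F‖ = ‖Dbar - U * D‖ := rfl
      _ ≤ ‖Dbar‖ + ‖U * D‖ := norm_sub_le _ _
      _ ≤ ‖D‖ + ‖U‖ * ‖D‖ := by
          rw [hDbar_star, norm_star]
          exact add_le_add le_rfl (norm_mul_le _ _)
      _ = 2 * ‖D‖ := by rw [CStarRing.norm_of_mem_unitary hU]; ring
  -- 1 is not in the spectrum of U₀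
  have h1not : (1 : ℂ) ∉ spectrum ℂ U₀ := by
    rw [spectrum.notMem_iff, map_one]
    exact hb_unit
  -- the minimum of |1 - z| on the spectrum
  have hne : (spectrum ℂ U₀).Nonempty := spectrum.nonempty U₀
  have hcpt : IsCompact (spectrum ℂ U₀) := spectrum.isCompact U₀
  obtain ⟨z₀, hz₀mem, hz₀min⟩ := hcpt.exists_isMinOn hne
    ((continuous_norm.comp (continuous_const.sub continuous_id)).continuousOn :
      ContinuousOn (fun z : ℂ => ‖1 - z‖) _)
  have hz₀min' : ∀ z ∈ spectrum ℂ U₀, ‖1 - z₀‖ ≤ ‖1 - z‖ :=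
    fun z hz => hz₀min hz
  set S := {r : ℝ | ∃ z ∈ spectrum ℂ U₀, r = ‖1 - z‖} with hS
  have hμdef : μ = sInf S := rfl
  have hSbdd : BddBelow S := ⟨0, by rintro r ⟨z, hz, rfl⟩; positivity⟩
  have hμ : μ = ‖1 - z₀‖ := by
    rw [hμdef]
    apply le_antisymm
    · exact csInf_le hSbdd ⟨z₀, hz₀mem, rfl⟩
    · exact le_csInf ⟨_, ⟨z₀, hz₀mem, rfl⟩⟩ (by rintro r ⟨z, hz, rfl⟩; exact hz₀min' z hz)
  have hμpos : 0 < μ := by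
    rw [hμ]
    apply norm_pos_iff.2
    intro h0
    rw [sub_eq_zero] at h0
    exact h1not (h0 ▸ hz₀mem)
  -- normality
  obtain ⟨hu1, hu2⟩ := Unitary.mem_iff.1 hU₀mem
  set b : Matrix (Fin (2 * n)) (Fin (2 * n)) ℂ := 1 - U₀ with hb
  have hbb : Commute (star b) b := by
    show star b * b = b * star b
    rw [hb, star_sub, star_one]
    have e1 : (1 - star U₀) * (1 - U₀) = 1 - U₀ - star U₀ + star U₀ * U₀ := by noncomm_ring
    have e2 : (1 - U₀) * (1 - star U₀) = 1 - U₀ - star U₀ + U₀ * star U₀ := by noncomm_ring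
    rw [e1, e2, hu1, hu2]
  have hsb : star b * star G = 1 := by rw [← star_mul, hG2, star_one]
  have hsg : star G * star b = 1 := by rw [← star_mul, hG1, star_one]
  have hgg : Commute (star G) G := by
    set bu : (Matrix (Fin (2 * n)) (Fin (2 * n)) ℂ)ˣ := ⟨b, G, hG1, hG2⟩ with hbu
    set sbu : (Matrix (Fin (2 * n)) (Fin (2 * n)) ℂ)ˣ := ⟨star b, star G, hsb, hsg⟩ with hsbu
    have h1 : Commute (sbu : Matrix (Fin (2 * n)) (Fin (2 * n)) ℂ) (bu : _) := hbb
    exact h1.units_inv_left.units_inv_right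
  haveI hGnormal : IsStarNormal G := ⟨hgg⟩
  have hG_unit : IsUnit G := ⟨⟨G, b, hG2, hG1⟩, rfl⟩
  -- spectral bound for G
  have hkey : ∀ z ∈ spectrum ℂ G, ‖z‖ ≤ μ⁻¹ := by
    intro z hz
    have hz0 : z ≠ 0 := by
      intro h0
      exact spectrum.zero_notMem ℂ hG_unit (h0 ▸ hz)
    set zu : ℂˣ := Units.mk0 z hz0 with hzu
    set gu : (Matrix (Fin (2 * n)) (Fin (2 * n)) ℂ)ˣ := ⟨G, b, hG2, hG1⟩ with hgu
    have hmem : (zu : ℂ) ∈ spectrum ℂ (gu : Matrix (Fin (2 * n)) (Fin (2 * n)) ℂ) := hz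
    have hinv : ((zu⁻¹ : ℂˣ) : ℂ) ∈ spectrum ℂ ((gu⁻¹ : _ˣ) : Matrix (Fin (2 * n)) (Fin (2 * n)) ℂ) :=
      spectrum.inv_mem_iff.1 hmem
    have hguinv : ((gu⁻¹ : _ˣ) : Matrix (Fin (2 * n)) (Fin (2 * n)) ℂ) = b := rfl
    rw [hguinv] at hinv
    have hmem2 : z⁻¹ ∈ (({1} : Set ℂ) - spectrum ℂ U₀) := by
      rw [show (({1} : Set ℂ) - spectrum ℂ U₀) = spectrum ℂ ((algebraMap ℂ _) 1 - U₀) from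
        spectrum.singleton_sub_eq U₀ 1]
      rw [map_one]
      exact hinv
    obtain ⟨x, hx, y, hy, hxy⟩ := hmem2
    rw [Set.mem_singleton_iff] at hx
    subst hx
    have habs : ‖z⁻¹‖ = ‖1 - y‖ := by rw [← hxy]
    have hge : μ ≤ ‖z⁻¹‖ := by
      rw [habs, hμ]
      exact hz₀min' y hy
    have : ‖z‖ = (‖z⁻¹‖)⁻¹ := by
      rw [norm_inv, inv_inv]
    rw [this]
    exact inv_anti₀ hμpos hge
  -- norm bound for G via the spectral radius
  have hG_norm : ‖G‖ ≤ μ⁻¹ := by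
    have hr : spectralRadius ℂ G = (‖G‖₊ : ENNReal) := IsStarNormal.spectralRadius_eq_nnnorm G
    have hub : spectralRadius ℂ G ≤ ENNReal.ofReal μ⁻¹ := by
      rw [spectralRadius]
      refine iSup₂_le fun z hz => ?_
      rw [ENNReal.le_ofReal_iff_toReal_le ENNReal.coe_ne_top (by positivity)]
      simpa using hkey z hz
    rw [hr] at hub
    have := (ENNReal.le_ofReal_iff_toReal_le ENNReal.coe_ne_top (by positivity)).1 hub
    simpa using this
  -- norm bound for F⁻¹
  have hFinv_norm : ‖F⁻¹‖ ≤ ‖D⁻¹‖ / μ := by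
    rw [hFinv]
    calc ‖Dbar⁻¹ * G‖ ≤ ‖Dbar⁻¹‖ * ‖G‖ := norm_mul_le _ _
      _ = ‖D⁻¹‖ * ‖G‖ := by rw [hDbarinv_star, norm_star]
      _ ≤ ‖D⁻¹‖ * μ⁻¹ := mul_le_mul_of_nonneg_left hG_norm (norm_nonneg _)
      _ = ‖D⁻¹‖ / μ := by rw [div_eq_mul_inv]
  refine ⟨hF_unit, hF_norm, hFinv_norm, ?_⟩
  have hprod : ‖F‖ * ‖F⁻¹‖ ≤ (2 * ‖D‖) * (‖D⁻¹‖ / μ) :=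
    mul_le_mul hF_norm hFinv_norm (norm_nonneg _) (by positivity)
  calc ‖F‖ * ‖F⁻¹‖ ≤ (2 * ‖D‖) * (‖D⁻¹‖ / μ) := hprod
    _ = 2 * ‖D‖ * ‖D⁻¹‖ / μ := by ring
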